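/- In the uniform-density hinge-loss example with w₀ = w₁, the map λ ↦ c(λ) (minimizer of the λ-mixture expected hinge loss) satisfies the Lipschitz bound |c(λ) − c(λ')| ≤ 2(t₁ − t₀ + 1)·|λ − λ'| for all λ, λ' ∈ [0,1]. -/

import Mathlib

open MeasureTheory

/-- Expected hinge loss of the threshold classifier `sign (x - c)` for a group with
uniform density `w` on `[α, β]` and true threshold `t`. -/
noncomputable def hingeExp (α β t w : ℝ) (c : ℝ) : ℝ :=
  ∫ x in Set.Icc α β, max 0 (1 - Real.sign (x - t) * (x - c)) * w

noncomputable def Pfun (α β t x : ℝ) : ℝ :=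
  max 0 (1 + t - x) ^ 2 - max 0 (1 + α - x) ^ 2
    + max 0 (1 + x - t) ^ 2 - max 0 (1 + x - β) ^ 2

noncomputable def Phi (t₀ t₁ l x : ℝ) : ℝ :=
  l * (max 0 (1 + t₀ - x) ^ 2 + (1 + x - t₀) ^ 2)
    + (1 - l) * ((1 + t₁ - x) ^ 2 + max 0 (1 + x - t₁) ^ 2)

noncomputable def Ered (t₀ t₁ x : ℝ) : ℝ :=
  max 0 (1 + t₀ - x) ^ 2 + (1 + x - t₀) ^ 2
    - (1 + t₁ - x) ^ 2 - max 0 (1 + x - t₁) ^ 2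


lemma max0_sub_le' {x y : ℝ} (h : y ≤ x) : max 0 x - max 0 y ≤ x - y := by
  rcases le_total x 0 with hx | hx
  · rw [max_eq_left hx, max_eq_left (h.trans hx)]; linarith
  · rw [max_eq_right hx]
    rcases le_total y 0 with hy | hy
    · rw [max_eq_left hy]; linarith
    · rw [max_eq_right hy]

lemma hasDerivAt_maxsq (u : ℝ) :
    HasDerivAt (fun v : ℝ => max 0 v ^ 2) (2 * max 0 u) u := by
  rcases lt_trichotomy u 0 with h | h | h
  · rw [max_eq_left h.le, mul_zero]
    have hev : (fun v : ℝ => max 0 v ^ 2) =ᶠ[nhds u] fun _ => (0:ℝ) := by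
      filter_upwards [Iio_mem_nhds h] with v hv
      simp [max_eq_left (le_of_lt (Set.mem_Iio.mp hv))]
    exact (hasDerivAt_const u (0:ℝ)).congr_of_eventuallyEq hev
  · subst h
    rw [show max (0:ℝ) 0 = 0 by simp, mul_zero]
    rw [hasDerivAt_iff_isLittleO]
    simp only [sub_zero, smul_zero, max_self, ne_eq, OfNat.ofNat_ne_zero,
      not_false_eq_true, zero_pow, sub_zero]
    rw [Asymptotics.isLittleO_iff]
    intro ε hε
    filter_upwards [Metric.ball_mem_nhds (0:ℝ) hε] with v hv
    rw [Metric.mem_ball, Real.dist_eq, sub_zero] at hv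
    have h1 : max (0:ℝ) v ≤ |v| := max_le (abs_nonneg v) (le_abs_self v)
    have h2 : (0:ℝ) ≤ max 0 v := le_max_left _ _
    rw [Real.norm_eq_abs, Real.norm_eq_abs, abs_of_nonneg (by positivity : (0:ℝ) ≤ max 0 v ^ 2)]
    nlinarith [abs_nonneg v]
  · rw [max_eq_right h.le]
    have hev : (fun v : ℝ => max 0 v ^ 2) =ᶠ[nhds u] fun v => v ^ 2 := by
      filter_upwards [Ioi_mem_nhds h] with v hv
      simp [max_eq_right (le_of_lt (Set.mem_Ioi.mp hv))]
    have := hasDerivAt_pow 2 u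
    norm_num at this
    exact this.congr_of_eventuallyEq hev

lemma hingeExp_eq (α β t w c : ℝ) (hαt : α ≤ t) (htβ : t ≤ β) :
    hingeExp α β t w c = w / 2 * Pfun α β t c := by
  have hne : ∀ᵐ x : ℝ, x ≠ t := by
    rw [MeasureTheory.ae_iff]
    have : {a : ℝ | ¬a ≠ t} = {t} := by ext a; simp
    rw [this]
    exact Real.volume_singleton
  have hg1c : Continuous (fun x : ℝ => max 0 (1 + x - c) * w) := by fun_prop
  have hg2c : Continuous (fun x : ℝ => max 0 (1 + c - x) * w) := by fun_prop
  have hae1 : ∀ᵐ x : ℝ, x ∈ Set.uIoc α t →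
      max 0 (1 - Real.sign (x - t) * (x - c)) * w = max 0 (1 + x - c) * w := by
    filter_upwards [hne] with x hx hmem
    rw [Set.uIoc_of_le hαt] at hmem
    have hxt : x < t := lt_of_le_of_ne hmem.2 hx
    rw [Real.sign_of_neg (by linarith : x - t < 0)]
    have : 1 - (-1) * (x - c) = 1 + x - c := by ring
    rw [this]
  have hae2 : ∀ᵐ x : ℝ, x ∈ Set.uIoc t β →
      max 0 (1 - Real.sign (x - t) * (x - c)) * w = max 0 (1 + c - x) * w := by
    filter_upwards with x hmem
    rw [Set.uIoc_of_le htβ] at hmem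
    rw [Real.sign_of_pos (by linarith [hmem.1] : (0:ℝ) < x - t)]
    have : 1 - 1 * (x - c) = 1 + c - x := by ring
    rw [this]
  have hint1 : IntervalIntegrable
      (fun x => max 0 (1 - Real.sign (x - t) * (x - c)) * w) volume α t := by
    rw [intervalIntegrable_iff]
    have h := hg1c.intervalIntegrable (μ := volume) α t
    rw [intervalIntegrable_iff] at h
    exact h.congr_fun_ae (((ae_restrict_iff' measurableSet_uIoc).mpr
      (hae1.mono fun x hx hm => (hx hm).symm)))
  have hint2 : IntervalIntegrable
      (fun x => max 0 (1 - Real.sign (x - t) * (x - c)) * w) volume t β := by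
    rw [intervalIntegrable_iff]
    have h := hg2c.intervalIntegrable (μ := volume) t β
    rw [intervalIntegrable_iff] at h
    exact h.congr_fun_ae (((ae_restrict_iff' measurableSet_uIoc).mpr
      (hae2.mono fun x hx hm => (hx hm).symm)))
  have e1 : ∫ x in α..t, max 0 (1 + x - c) * w
      = w / 2 * max 0 (1 + t - c) ^ 2 - w / 2 * max 0 (1 + α - c) ^ 2 := by
    have hd : ∀ x ∈ Set.uIcc α t,
        HasDerivAt (fun y => w / 2 * max 0 (1 + y - c) ^ 2) (max 0 (1 + x - c) * w) x := by
      intro x _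
      have h1 : HasDerivAt (fun y : ℝ => 1 + y - c) 1 x := by
        simpa using ((hasDerivAt_id x).const_add 1).sub_const c
      have h2 := HasDerivAt.comp x (hasDerivAt_maxsq (1 + x - c)) h1
      have h3 := h2.const_mul (w / 2)
      refine h3.congr_deriv ?_
      ring
    rw [intervalIntegral.integral_eq_sub_of_hasDerivAt hd (hg1c.intervalIntegrable (μ := volume) α t)]
  have e2 : ∫ x in t..β, max 0 (1 + c - x) * w
      = w / 2 * max 0 (1 + c - t) ^ 2 - w / 2 * max 0 (1 + c - β) ^ 2 := by
    have hd : ∀ x ∈ Set.uIcc t β,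
        HasDerivAt (fun y => -(w / 2) * max 0 (1 + c - y) ^ 2) (max 0 (1 + c - x) * w) x := by
      intro x _
      have h1 : HasDerivAt (fun y : ℝ => 1 + c - y) (-1) x := by
        simpa using (hasDerivAt_id x).const_sub (1 + c)
      have h2 := HasDerivAt.comp x (hasDerivAt_maxsq (1 + c - x)) h1
      have h3 := h2.const_mul (-(w / 2))
      refine h3.congr_deriv ?_
      ring
    rw [intervalIntegral.integral_eq_sub_of_hasDerivAt hd (hg2c.intervalIntegrable (μ := volume) t β)]
    ring
  unfold hingeExp
  rw [MeasureTheory.integral_Icc_eq_integral_Ioc,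
      ← intervalIntegral.integral_of_le (hαt.trans htβ),
      ← intervalIntegral.integral_add_adjacent_intervals hint1 hint2,
      intervalIntegral.integral_congr_ae hae1, intervalIntegral.integral_congr_ae hae2,
      e1, e2]
  unfold Pfun
  ring

lemma Pfun_eq_lo (α β t x : ℝ) (hh1 : α + 1 ≤ x) (hh2 : x ≤ β - 1) (hh3 : t - 1 ≤ x) :
    Pfun α β t x = max 0 (1 + t - x) ^ 2 + (1 + x - t) ^ 2 := by
  unfold Pfun
  rw [max_eq_left (by linarith : (1 + α - x) ≤ 0),
      max_eq_left (by linarith : (1 + x - β) ≤ 0),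
      max_eq_right (by linarith : (0:ℝ) ≤ 1 + x - t)]
  ring

lemma Pfun_eq_hi (α β t x : ℝ) (hh1 : α + 1 ≤ x) (hh2 : x ≤ β - 1) (hh3 : x ≤ t + 1) :
    Pfun α β t x = (1 + t - x) ^ 2 + max 0 (1 + x - t) ^ 2 := by
  unfold Pfun
  rw [max_eq_left (by linarith : (1 + α - x) ≤ 0),
      max_eq_left (by linarith : (1 + x - β) ≤ 0),
      max_eq_right (by linarith : (0:ℝ) ≤ 1 + t - x)]
  ring

lemma Pfun_upper (α β t e x : ℝ) (hh1 : t + 1 ≤ e) (hh2 : α + 1 ≤ e) (hh3 : e < β - 1)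
    (hh4 : e < x) : Pfun α β t e < Pfun α β t x := by
  unfold Pfun
  rw [max_eq_left (by linarith : (1 + t - e) ≤ 0),
      max_eq_left (by linarith : (1 + t - x) ≤ 0),
      max_eq_left (by linarith : (1 + α - e) ≤ 0),
      max_eq_left (by linarith : (1 + α - x) ≤ 0),
      max_eq_left (by linarith : (1 + e - β) ≤ 0),
      max_eq_right (by linarith : (0:ℝ) ≤ 1 + e - t),
      max_eq_right (by linarith : (0:ℝ) ≤ 1 + x - t)]
  rcases le_total (1 + x - β) 0 with h | h
  · rw [max_eq_left h]; nlinarith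
  · rw [max_eq_right h]; nlinarith

lemma Pfun_lower (α β t e x : ℝ) (hh1 : e + 1 ≤ t) (hh2 : α < e - 1) (hh3 : e ≤ β - 1)
    (hh4 : x < e) : Pfun α β t e < Pfun α β t x := by
  unfold Pfun
  rw [max_eq_left (by linarith : (1 + e - t) ≤ 0),
      max_eq_left (by linarith : (1 + x - t) ≤ 0),
      max_eq_left (by linarith : (1 + e - β) ≤ 0),
      max_eq_left (by linarith : (1 + x - β) ≤ 0),
      max_eq_left (by linarith : (1 + α - e) ≤ 0),
      max_eq_right (by linarith : (0:ℝ) ≤ 1 + t - e),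
      max_eq_right (by linarith : (0:ℝ) ≤ 1 + t - x)]
  rcases le_total (1 + α - x) 0 with h | h
  · rw [max_eq_left h]; nlinarith
  · rw [max_eq_right h]; nlinarith

lemma sq_max0_midpoint (u v : ℝ) :
    max 0 ((u + v) / 2) ^ 2 ≤ (max 0 u ^ 2 + max 0 v ^ 2) / 2 := by
  have hu : (0:ℝ) ≤ max 0 u := le_max_left _ _
  have hv : (0:ℝ) ≤ max 0 v := le_max_left _ _
  have hm : max 0 ((u + v) / 2) ≤ (max 0 u + max 0 v) / 2 := by
    rcases le_total ((u + v) / 2) 0 with h | h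
    · rw [max_eq_left h]; linarith
    · rw [max_eq_right h]
      have h1 : u ≤ max 0 u := le_max_right _ _
      have h2 : v ≤ max 0 v := le_max_right _ _
      linarith
  have h0 : (0:ℝ) ≤ max 0 ((u + v) / 2) := le_max_left _ _
  nlinarith [sq_nonneg (max 0 u - max 0 v)]

lemma Phi_midpoint (t₀ t₁ l a b : ℝ) (h0 : 0 ≤ l) (h1 : l ≤ 1) :
    Phi t₀ t₁ l ((a + b) / 2)
      ≤ Phi t₀ t₁ l a / 2 + Phi t₀ t₁ l b / 2 - (a - b) ^ 2 / 4 := by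
  unfold Phi
  have e1 : 1 + t₀ - (a + b) / 2 = ((1 + t₀ - a) + (1 + t₀ - b)) / 2 := by ring
  have e2 : 1 + (a + b) / 2 - t₁ = ((1 + a - t₁) + (1 + b - t₁)) / 2 := by ring
  rw [e1, e2]
  have A := sq_max0_midpoint (1 + t₀ - a) (1 + t₀ - b)
  have B := sq_max0_midpoint (1 + a - t₁) (1 + b - t₁)
  nlinarith [mul_le_mul_of_nonneg_left A h0,
    mul_le_mul_of_nonneg_left B (by linarith : (0:ℝ) ≤ 1 - l)]

lemma Ered_lip (t₀ t₁ a b : ℝ) (hab : a ≤ b) (ha : t₀ - 1 ≤ a) (hb : b ≤ t₁ + 1)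
    (ht : t₀ ≤ t₁) :
    Ered t₀ t₁ b - Ered t₀ t₁ a ≤ (2 * (t₁ - t₀) + 4) * (b - a)
      ∧ -((2 * (t₁ - t₀) + 4) * (b - a)) ≤ Ered t₀ t₁ b - Ered t₀ t₁ a := by
  unfold Ered
  have m0ab : max 0 (1 + t₀ - b) ≤ max 0 (1 + t₀ - a) :=
    max_le_max le_rfl (by linarith)
  have m0d : max 0 (1 + t₀ - a) - max 0 (1 + t₀ - b) ≤ b - a := by
    have := max0_sub_le' (show (1 + t₀ - b) ≤ (1 + t₀ - a) by linarith)
    linarith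
  have m0a2 : max 0 (1 + t₀ - a) ≤ 2 := max_le (by norm_num) (by linarith)
  have m0b0 : (0:ℝ) ≤ max 0 (1 + t₀ - b) := le_max_left _ _
  have m1ab : max 0 (1 + a - t₁) ≤ max 0 (1 + b - t₁) :=
    max_le_max le_rfl (by linarith)
  have m1d : max 0 (1 + b - t₁) - max 0 (1 + a - t₁) ≤ b - a := by
    have := max0_sub_le' (show (1 + a - t₁) ≤ (1 + b - t₁) by linarith)
    linarith
  have m1b2 : max 0 (1 + b - t₁) ≤ 2 := max_le (by norm_num) (by linarith)
  have m1a0 : (0:ℝ) ≤ max 0 (1 + a - t₁) := le_max_left _ _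
  constructor
  · nlinarith [mul_nonneg (sub_nonneg.mpr m0ab) (sub_nonneg.mpr hab),
      mul_nonneg (sub_nonneg.mpr m1ab) (sub_nonneg.mpr hab)]
  · nlinarith [mul_le_mul m0d (by linarith : max 0 (1 + t₀ - a) + max 0 (1 + t₀ - b) ≤ 4)
        (by linarith) (by linarith : (0:ℝ) ≤ b - a),
      mul_le_mul m1d (by linarith : max 0 (1 + b - t₁) + max 0 (1 + a - t₁) ≤ 4)
        (by linarith) (by linarith : (0:ℝ) ≤ b - a),
      mul_nonneg (show (0:ℝ) ≤ 2 * (t₁ - t₀) by linarith) (sub_nonneg.mpr hab)]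

set_option maxHeartbeats 2000000 in
theorem stmt_17 (α₀ β₀ α₁ β₁ t₀ t₁ : ℝ)
    (h1 : α₀ + 1 < α₁ + 1) (h2 : α₁ + 1 < t₀ - 1) (h3 : t₀ + 1 < t₁ - 1)
    (h4 : t₁ + 1 < β₀ - 1) (h5 : β₀ - 1 < β₁ - 1)
    (hw : β₀ - α₀ = β₁ - α₁)
    (c : ℝ → ℝ)
    (hmin : ∀ lam ∈ Set.Icc (0:ℝ) 1, ∀ y,
      lam * hingeExp α₀ β₀ t₀ (1 / (β₀ - α₀)) (c lam)
          + (1 - lam) * hingeExp α₁ β₁ t₁ (1 / (β₁ - α₁)) (c lam)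
        ≤ lam * hingeExp α₀ β₀ t₀ (1 / (β₀ - α₀)) y
          + (1 - lam) * hingeExp α₁ β₁ t₁ (1 / (β₁ - α₁)) y) :
    ∀ lam ∈ Set.Icc (0:ℝ) 1, ∀ lam' ∈ Set.Icc (0:ℝ) 1,
      |c lam - c lam'| ≤ 2 * (t₁ - t₀ + 1) * |lam - lam'| := by
  have hba : (0:ℝ) < β₀ - α₀ := by linarith
  have hW : (0:ℝ) < 1 / (β₀ - α₀) := by positivity
  -- key : purified minimization property
  have key : ∀ l ∈ Set.Icc (0:ℝ) 1, ∀ y,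
      l * Pfun α₀ β₀ t₀ (c l) + (1 - l) * Pfun α₁ β₁ t₁ (c l)
        ≤ l * Pfun α₀ β₀ t₀ y + (1 - l) * Pfun α₁ β₁ t₁ y := by
    intro l hl y
    have h := hmin l hl y
    rw [← hw] at h
    rw [hingeExp_eq α₀ β₀ t₀ (1 / (β₀ - α₀)) (c l) (by linarith) (by linarith),
        hingeExp_eq α₀ β₀ t₀ (1 / (β₀ - α₀)) y (by linarith) (by linarith),
        hingeExp_eq α₁ β₁ t₁ (1 / (β₀ - α₀)) (c l) (by linarith) (by linarith),
        hingeExp_eq α₁ β₁ t₁ (1 / (β₀ - α₀)) y (by linarith) (by linarith)] at h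
    have h2 : (1 / (β₀ - α₀)) / 2 * (l * Pfun α₀ β₀ t₀ (c l) + (1 - l) * Pfun α₁ β₁ t₁ (c l))
        ≤ (1 / (β₀ - α₀)) / 2 * (l * Pfun α₀ β₀ t₀ y + (1 - l) * Pfun α₁ β₁ t₁ y) := by
      nlinarith [h]
    exact le_of_mul_le_mul_left h2 (by positivity)
  -- location of minimizers
  have loc : ∀ l ∈ Set.Icc (0:ℝ) 1, t₀ - 1 ≤ c l ∧ c l ≤ t₁ + 1 := by
    intro l hl
    obtain ⟨hl0, hl1⟩ := hl
    constructor
    · by_contra hcon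
      push_neg at hcon
      have p0 := Pfun_lower α₀ β₀ t₀ (t₀ - 1) (c l) (by linarith) (by linarith) (by linarith) hcon
      have p1 := Pfun_lower α₁ β₁ t₁ (t₀ - 1) (c l) (by linarith) (by linarith) (by linarith) hcon
      have hk := key l ⟨hl0, hl1⟩ (t₀ - 1)
      rcases le_total l (1/2) with hhalf | hhalf
      · nlinarith [mul_le_mul_of_nonneg_left (le_of_lt p0) hl0]
      · nlinarith [mul_le_mul_of_nonneg_left (le_of_lt p1) (by linarith : (0:ℝ) ≤ 1 - l)]
    · by_contra hcon
      push_neg at hcon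
      have p0 := Pfun_upper α₀ β₀ t₀ (t₁ + 1) (c l) (by linarith) (by linarith) (by linarith) hcon
      have p1 := Pfun_upper α₁ β₁ t₁ (t₁ + 1) (c l) (by linarith) (by linarith) (by linarith) hcon
      have hk := key l ⟨hl0, hl1⟩ (t₁ + 1)
      rcases le_total l (1/2) with hhalf | hhalf
      · nlinarith [mul_le_mul_of_nonneg_left (le_of_lt p0) hl0]
      · nlinarith [mul_le_mul_of_nonneg_left (le_of_lt p1) (by linarith : (0:ℝ) ≤ 1 - l)]
  -- transfer to Phi on the interval
  have trans : ∀ l x : ℝ, t₀ - 1 ≤ x → x ≤ t₁ + 1 →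
      l * Pfun α₀ β₀ t₀ x + (1 - l) * Pfun α₁ β₁ t₁ x = Phi t₀ t₁ l x := by
    intro l x hx1 hx2
    rw [Pfun_eq_lo α₀ β₀ t₀ x (by linarith) (by linarith) (by linarith),
        Pfun_eq_hi α₁ β₁ t₁ x (by linarith) (by linarith) (by linarith)]
    unfold Phi
    ring
  -- strong minimality
  have smin : ∀ l ∈ Set.Icc (0:ℝ) 1, ∀ y, t₀ - 1 ≤ y → y ≤ t₁ + 1 →
      Phi t₀ t₁ l (c l) + 3/4 * (y - c l) ^ 2 ≤ Phi t₀ t₁ l y := by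
    intro l hl y hy1 hy2
    obtain ⟨hc1, hc2⟩ := loc l hl
    obtain ⟨hl0, hl1⟩ := hl
    have M1 := Phi_midpoint t₀ t₁ l (c l) y hl0 hl1
    have M2 := Phi_midpoint t₀ t₁ l (c l) ((c l + y) / 2) hl0 hl1
    have hz2a : t₀ - 1 ≤ (c l + (c l + y) / 2) / 2 := by linarith
    have hz2b : (c l + (c l + y) / 2) / 2 ≤ t₁ + 1 := by linarith
    have K2 : Phi t₀ t₁ l (c l) ≤ Phi t₀ t₁ l ((c l + (c l + y) / 2) / 2) := by
      rw [← trans l (c l) hc1 hc2, ← trans l ((c l + (c l + y) / 2) / 2) hz2a hz2b]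
      exact key l ⟨hl0, hl1⟩ _
    nlinarith [M1, M2, K2]
  -- final combination
  intro lam hlam lam' hlam'
  have S1 := smin lam hlam (c lam') (loc lam' hlam').1 (loc lam' hlam').2
  have S2 := smin lam' hlam' (c lam) (loc lam hlam).1 (loc lam hlam).2
  have comb : 3/2 * (c lam' - c lam) ^ 2
      ≤ (lam - lam') * (Ered t₀ t₁ (c lam') - Ered t₀ t₁ (c lam)) := by
    unfold Phi at S1 S2
    unfold Ered
    nlinarith [S1, S2]
  have hEbound : (lam - lam') * (Ered t₀ t₁ (c lam') - Ered t₀ t₁ (c lam))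
      ≤ |lam - lam'| * ((2 * (t₁ - t₀) + 4) * |c lam' - c lam|) := by
    have habs : |Ered t₀ t₁ (c lam') - Ered t₀ t₁ (c lam)|
        ≤ (2 * (t₁ - t₀) + 4) * |c lam' - c lam| := by
      rcases le_total (c lam) (c lam') with hord | hord
      · have := Ered_lip t₀ t₁ (c lam) (c lam') hord (loc lam hlam).1 (loc lam' hlam').2
          (by linarith)
        rw [abs_of_nonneg (by linarith : (0:ℝ) ≤ c lam' - c lam)]
        exact abs_le.mpr ⟨by linarith [this.2], this.1⟩
      · have := Ered_lip t₀ t₁ (c lam') (c lam) hord (loc lam' hlam').1 (loc lam hlam).2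
          (by linarith)
        rw [abs_of_nonpos (by linarith : c lam' - c lam ≤ 0)]
        exact abs_le.mpr ⟨by linarith [this.1], by linarith [this.2]⟩
    calc (lam - lam') * (Ered t₀ t₁ (c lam') - Ered t₀ t₁ (c lam))
        ≤ |(lam - lam') * (Ered t₀ t₁ (c lam') - Ered t₀ t₁ (c lam))| := le_abs_self _
      _ = |lam - lam'| * |Ered t₀ t₁ (c lam') - Ered t₀ t₁ (c lam)| := abs_mul _ _
      _ ≤ |lam - lam'| * ((2 * (t₁ - t₀) + 4) * |c lam' - c lam|) := by
          exact mul_le_mul_of_nonneg_left habs (abs_nonneg _)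
  have main : 3/2 * |c lam - c lam'| ^ 2
      ≤ |lam - lam'| * ((2 * (t₁ - t₀) + 4) * |c lam - c lam'|) := by
    rw [abs_sub_comm (c lam) (c lam')]
    calc 3/2 * |c lam' - c lam| ^ 2 = 3/2 * (c lam' - c lam) ^ 2 := by rw [sq_abs]
      _ ≤ _ := le_trans comb hEbound
  rcases eq_or_lt_of_le (abs_nonneg (c lam - c lam')) with h0 | h0
  · rw [← h0]
    have := abs_nonneg (lam - lam')
    nlinarith
  · have h1 : |c lam - c lam'| * |c lam - c lam'|
        ≤ (2 * (t₁ - t₀ + 1) * |lam - lam'|) * |c lam - c lam'| := by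
      nlinarith [mul_nonneg (mul_nonneg (abs_nonneg (lam - lam')) (abs_nonneg (c lam - c lam')))
        (show (0:ℝ) ≤ t₁ - t₀ - 1 by linarith)]
    exact le_of_mul_le_mul_right h1 h0
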